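/- Let G be a strongly connected simple digraph with maximum outdegree Δ⁺ and α ∈ [0,1). Then λ_α(G) > αΔ⁺. -/

import Mathlib

open scoped Classical
open Matrix

/-- Spectral radius: largest modulus of (complex) eigenvalues, i.e. roots of the
characteristic polynomial of the complexified matrix. -/
noncomputable def specRad {m : Type*} [Fintype m] [DecidableEq m] (M : Matrix m m ℝ) : ℝ :=
  sSup {r : ℝ | ∃ μ : ℂ, (M.map Complex.ofReal).charpoly.IsRoot μ ∧ r = ‖μ‖}

/-- Irreducibility of a matrix: the associated digraph is strongly connected. -/
def Irred {n : ℕ} (M : Matrix (Fin n) (Fin n) ℝ) : Prop :=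
  ∀ i j : Fin n, Relation.ReflTransGen (fun a b => M a b ≠ 0) i j

/-- Outdegree of a vertex in a digraph on `Fin n`. -/
noncomputable def outdeg {n : ℕ} (G : Fin n → Fin n → Prop) (i : Fin n) : ℕ :=
  (Finset.univ.filter (fun j => G i j)).card

/-- Indegree of a vertex. -/
noncomputable def indeg {n : ℕ} (G : Fin n → Fin n → Prop) (i : Fin n) : ℕ :=
  (Finset.univ.filter (fun j => G j i)).card

/-- The matrix `A_α(G) = α D(G) + (1-α) A(G)`. -/
noncomputable def Aalpha {n : ℕ} (α : ℝ) (G : Fin n → Fin n → Prop) :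
    Matrix (Fin n) (Fin n) ℝ :=
  α • Matrix.diagonal (fun i => (outdeg G i : ℝ)) +
    (1 - α) • (Matrix.of fun i j => if G i j then (1 : ℝ) else 0)

/-- The `A_α` spectral radius of a digraph. -/
noncomputable def lamAlpha {n : ℕ} (α : ℝ) (G : Fin n → Fin n → Prop) : ℝ :=
  specRad (Aalpha α G)

/-- Strong connectivity of a digraph. -/
def SConn {n : ℕ} (G : Fin n → Fin n → Prop) : Prop :=
  ∀ u v : Fin n, Relation.ReflTransGen G u v

/-- Isomorphism of digraphs on `Fin n`. -/
def DIso {n : ℕ} (G H : Fin n → Fin n → Prop) : Prop :=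
  ∃ e : Equiv.Perm (Fin n), ∀ u v, G u v ↔ H (e u) (e v)

/-- The directed cycle on `Fin n`. -/
def dirCycle (n : ℕ) : Fin n → Fin n → Prop :=
  fun i j => j.val = (i.val + 1) % n


/-- Deleting a set of vertices from a digraph. -/
def delVerts {n : ℕ} (G : Fin n → Fin n → Prop) (S : Finset (Fin n)) :
    Fin n → Fin n → Prop :=
  fun a b => G a b ∧ a ∉ S ∧ b ∉ S

/-- The digraph obtained by deleting the vertices of `S` is strongly connected. -/
def SConnAvoid {n : ℕ} (G : Fin n → Fin n → Prop) (S : Finset (Fin n)) : Prop :=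
  ∀ u v : Fin n, u ∉ S → v ∉ S → Relation.ReflTransGen (delVerts G S) u v

/-- The vertex connectivity of `G` equals `k`. -/
def vertexConnIs {n : ℕ} (G : Fin n → Fin n → Prop) (k : ℕ) : Prop :=
  (∃ S : Finset (Fin n), S.card = k ∧ ¬ SConnAvoid G S) ∧
    ∀ S : Finset (Fin n), ¬ SConnAvoid G S → k ≤ S.card

/-- Deleting a set of arcs from a digraph. -/
def delArcs {n : ℕ} (G : Fin n → Fin n → Prop) (S : Finset (Fin n × Fin n)) :
    Fin n → Fin n → Prop :=
  fun a b => G a b ∧ (a, b) ∉ S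

/-- The arc connectivity of `G` equals `k`. -/
def arcConnIs {n : ℕ} (G : Fin n → Fin n → Prop) (k : ℕ) : Prop :=
  (∃ S : Finset (Fin n × Fin n), S.card = k ∧ ¬ SConn (delArcs G S)) ∧
    ∀ S : Finset (Fin n × Fin n), ¬ SConn (delArcs G S) → k ≤ S.card

/-- `G` contains a directed cycle of length `g`. -/
def hasCycleLen {n : ℕ} (G : Fin n → Fin n → Prop) (g : ℕ) : Prop :=
  ∃ c : Fin g → Fin n, Function.Injective c ∧
    ∀ i : Fin g, G (c i) (c ⟨(i.val + 1) % g, Nat.mod_lt _ i.pos⟩)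

/-- The girth of `G` equals `g`. -/
def girthIs {n : ℕ} (G : Fin n → Fin n → Prop) (g : ℕ) : Prop :=
  hasCycleLen G g ∧ ∀ m, 0 < m → m < g → ¬ hasCycleLen G m

/-- The clique number of `G` equals `d`. -/
def cliqueNumIs {n : ℕ} (G : Fin n → Fin n → Prop) (d : ℕ) : Prop :=
  (∃ S : Finset (Fin n), S.card = d ∧ ∀ u ∈ S, ∀ v ∈ S, u ≠ v → G u v ∧ G v u) ∧
    ∀ S : Finset (Fin n), (∀ u ∈ S, ∀ v ∈ S, u ≠ v → G u v ∧ G v u) → S.card ≤ d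

/-- The digraph `C_{n,g}`: the directed cycle `v_1 … v_g v_1` (indices `0,…,g-1`)
together with the directed path `v_g v_{g+1} … v_n v_1`. -/
def Cng (n g : ℕ) : Fin n → Fin n → Prop := fun i j =>
  j.val = i.val + 1 ∨ (i.val = g - 1 ∧ j.val = 0) ∨ (i.val = n - 1 ∧ j.val = 0)

/-- `C'_{n,g} = C_{n,g} - {(v_n, v_1)} + {(v_n, v_g)}`. -/
def Cng' (n g : ℕ) : Fin n → Fin n → Prop := fun i j =>
  j.val = i.val + 1 ∨ (i.val = g - 1 ∧ j.val = 0) ∨ (i.val = n - 1 ∧ j.val = g - 1)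

/-- The digraph `B_{n,d}`: a complete digraph on the `d` vertices
`{0} ∪ {n-d+1, …, n-1}` together with the directed path `v_1 v_2 … v_{n-d+2}`
(indices `0, 1, …, n-d+1`). -/
def Bnd (n d : ℕ) : Fin n → Fin n → Prop := fun i j =>
  (j.val = i.val + 1 ∧ j.val ≤ n - d + 1) ∨
    (i ≠ j ∧ (i.val = 0 ∨ n - d + 1 ≤ i.val) ∧ (j.val = 0 ∨ n - d + 1 ≤ j.val))

/-- `B'_{n,d} = B_{n,d} - {(v_{n-d+1}, v_{n-d+2})} + {(v_{n-d+1}, v_1)}`. -/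
def Bnd' (n d : ℕ) : Fin n → Fin n → Prop := fun i j =>
  (j.val = i.val + 1 ∧ j.val ≤ n - d) ∨ (i.val = n - d ∧ j.val = 0) ∨
    (i ≠ j ∧ (i.val = 0 ∨ n - d + 1 ≤ i.val) ∧ (j.val = 0 ∨ n - d + 1 ≤ j.val))

/-- The digraph `K(n,k,m)`: parts `K_m` (indices `< m`), `K_k` (indices in `[m, m+k)`),
`K_{n-k-m}` (indices `≥ m+k`); all parts complete, `K_k` joined both ways to the others,
and all one-way arcs from `K_m` to `K_{n-k-m}`. -/
def Knkm (n k m : ℕ) : Fin n → Fin n → Prop := fun i j =>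
  i ≠ j ∧ ¬(m + k ≤ i.val ∧ j.val < m)

-- auxiliary section to be inserted before the theorem
attribute [local instance] Matrix.linftyOpNormedRing Matrix.linftyOpNormedAlgebra

/-- Walks of length `k` in a digraph. -/
private def RWalk {n : ℕ} (G : Fin n → Fin n → Prop) : ℕ → Fin n → Fin n → Prop
  | 0 => fun a b => a = b
  | (k + 1) => fun a b => ∃ c, G a c ∧ RWalk G k c b

private lemma exists_rwalk {n : ℕ} {G : Fin n → Fin n → Prop} {a b : Fin n}
    (h : Relation.ReflTransGen G a b) : ∃ k, RWalk G k a b := by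
  induction h using Relation.ReflTransGen.head_induction_on with
  | refl => exact ⟨0, rfl⟩
  | head hac _ ih => obtain ⟨k, hk⟩ := ih; exact ⟨k + 1, _, hac, hk⟩

private lemma isRoot_charpoly_of_mem_spectrum {N : ℕ} {A : Matrix (Fin N) (Fin N) ℂ} {μ : ℂ}
    (h : μ ∈ spectrum ℂ A) : A.charpoly.IsRoot μ := by
  have hd : (Matrix.scalar (Fin N) μ - A).det = 0 := by
    by_contra hd
    apply spectrum.mem_iff.mp h
    have : IsUnit (Matrix.scalar (Fin N) μ - A) :=
      (Matrix.isUnit_iff_isUnit_det _).mpr (isUnit_iff_ne_zero.mpr hd)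
    convert this using 2
    simp [Matrix.algebraMap_eq_diagonal, Matrix.scalar_apply]
  rw [Polynomial.IsRoot, Matrix.charpoly, eval_det, matPolyEquiv_charmatrix]
  simpa using hd

private lemma linfty_norm_map_ofReal {N : ℕ} (A : Matrix (Fin N) (Fin N) ℝ) :
    ‖A.map Complex.ofReal‖ = ‖A‖ := by
  rw [Matrix.linfty_opNorm_def, Matrix.linfty_opNorm_def]
  congr 1
  congr 1 with i
  simp [Matrix.map_apply, Complex.nnnorm_real]

/-- `λ_α(G) > α Δ⁺` for a strongly connected digraph `G`. -/
theorem stmt5 {n : ℕ} (hn : 2 ≤ n) (α : ℝ) (hα0 : 0 ≤ α) (hα1 : α < 1)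
    (G : Fin n → Fin n → Prop) (hGs : ∀ i, ¬ G i i) (hSC : SConn G) :
    α * ((Finset.univ.sup fun i => outdeg G i : ℕ) : ℝ) < lamAlpha α G := by
  classical
  have hn0 : 0 < n := by omega
  have h1α : 0 < 1 - α := by linarith
  -- the max-outdegree vertex
  obtain ⟨u, -, hu⟩ := Finset.exists_mem_eq_sup (Finset.univ : Finset (Fin n))
    ⟨⟨0, hn0⟩, Finset.mem_univ _⟩ (fun i => outdeg G i)
  set Δ : ℝ := ((Finset.univ.sup fun i => outdeg G i : ℕ) : ℝ) with hΔdef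
  have hΔ0 : 0 ≤ Δ := by positivity
  set t : ℝ := α * Δ with htdef
  have ht0 : 0 ≤ t := by positivity
  -- distance to u
  have hex : ∀ i, ∃ k, RWalk G k i u := fun i => exists_rwalk (hSC i u)
  set d : Fin n → ℕ := fun i => Nat.find (hex i) with hddef
  have hdu : d u = 0 := (Nat.find_eq_zero (hex u)).mpr rfl
  have hstep : ∀ i, i ≠ u → ∃ j, G i j ∧ d j + 1 ≤ d i := by
    intro i hi
    have h0 : d i ≠ 0 := by
      intro h
      exact hi ((Nat.find_eq_zero (hex i)).mp h)
    obtain ⟨m, hm⟩ : ∃ m, d i = m + 1 := ⟨d i - 1, by omega⟩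
    have hsp : RWalk G (m + 1) i u := by rw [← hm]; exact Nat.find_spec (hex i)
    obtain ⟨j, hij, hj⟩ := hsp
    have hle : d j ≤ m := Nat.find_min' (hex j) hj
    exact ⟨j, hij, by omega⟩
  -- u has an out-neighbor
  obtain ⟨j0, hj0⟩ : ∃ j, G u j := by
    set v₀ : Fin n := if u = ⟨0, hn0⟩ then ⟨1, by omega⟩ else ⟨0, hn0⟩ with hv₀
    have hne : u ≠ v₀ := by
      rw [hv₀]; split_ifs with h
      · intro hc; exact absurd (congrArg Fin.val (h.symm.trans hc)) (by simp)
      · exact h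
    rcases (hSC u v₀).cases_head with h | ⟨c, hc, -⟩
    · exact absurd h hne
    · exact ⟨c, hc⟩
  -- parameters
  set δ : ℝ := (1 - α) / (α * Δ + 1) with hδdef
  have hδ0 : 0 < δ := by positivity
  have hδ1 : δ ≤ 1 := by
    rw [hδdef, div_le_one (by positivity)]
    nlinarith
  have hδmul : (α * Δ + 1) * δ = 1 - α := by
    rw [hδdef, mul_div_cancel₀]
    positivity
  set D : ℕ := Finset.univ.sup d with hDdef
  set ε : ℝ := (1 - α) * δ ^ D with hεdef
  have hε0 : 0 < ε := by positivity
  have hε1 : ε ≤ 1 - α := by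
    have : δ ^ D ≤ 1 := pow_le_one₀ hδ0.le hδ1
    nlinarith
  set s : ℝ := t + ε with hsdef
  have hs0 : 0 < s := by positivity
  have hts : t < s := by linarith
  -- the test vector
  set x : Fin n → ℝ := fun i => δ ^ (d i) with hxdef
  have hx0 : ∀ i, 0 < x i := fun i => pow_pos hδ0 _
  set M : Matrix (Fin n) (Fin n) ℝ := Aalpha α G with hMdef
  have hMentry : ∀ i j, 0 ≤ M i j := by
    intro i j
    rw [hMdef, Aalpha]
    simp only [Matrix.add_apply, Matrix.smul_apply, Matrix.of_apply, smul_eq_mul]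
    apply add_nonneg
    · rw [Matrix.diagonal_apply]
      split_ifs <;> positivity
    · split_ifs <;> nlinarith
  have hMv : ∀ (v : Fin n → ℝ) (i : Fin n), (M *ᵥ v) i =
      α * (outdeg G i : ℝ) * v i
        + (1 - α) * ∑ j ∈ Finset.univ.filter (fun j => G i j), v j := by
    intro v i
    rw [hMdef, Aalpha, Matrix.add_mulVec, Matrix.smul_mulVec, Matrix.smul_mulVec]
    simp only [Pi.add_apply, Pi.smul_apply, smul_eq_mul, Matrix.mulVec_diagonal]
    congr 1
    · ring
    · congr 1
      rw [Finset.sum_filter]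
      simp [Matrix.mulVec, dotProduct, ite_mul]
  -- the base inequality  M x ≥ s x
  have hbase : ∀ i, s * x i ≤ (M *ᵥ x) i := by
    intro i
    rw [hMv]
    by_cases hiu : i = u
    · subst hiu
      have hxu : x i = 1 := by rw [hxdef]; simp [hdu]
      have hdeg : (outdeg G i : ℝ) = Δ := by rw [hΔdef, hu]
      have hj0mem : j0 ∈ Finset.univ.filter (fun j => G i j) :=
        Finset.mem_filter.mpr ⟨Finset.mem_univ _, hj0⟩
      have hsum : δ ^ D ≤ ∑ j ∈ Finset.univ.filter (fun j => G i j), x j := by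
        calc δ ^ D ≤ δ ^ (d j0) :=
              pow_le_pow_of_le_one hδ0.le hδ1 (by rw [hDdef]; exact Finset.le_sup (Finset.mem_univ j0))
          _ = x j0 := rfl
          _ ≤ _ := Finset.single_le_sum (fun j _ => (hx0 j).le) hj0mem
      rw [hxu, hdeg]
      have : (1 - α) * δ ^ D ≤ (1 - α) * ∑ j ∈ Finset.univ.filter (fun j => G i j), x j :=
        mul_le_mul_of_nonneg_left hsum h1α.le
      rw [hsdef, htdef, hεdef]
      nlinarith
    · obtain ⟨j, hij, hdj⟩ := hstep i hiu
      have hjmem : j ∈ Finset.univ.filter (fun j' => G i j') :=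
        Finset.mem_filter.mpr ⟨Finset.mem_univ _, hij⟩
      have hsum : x j ≤ ∑ j' ∈ Finset.univ.filter (fun j' => G i j'), x j' :=
        Finset.single_le_sum (fun j' _ => (hx0 j').le) hjmem
      have hdi1 : d i = (d i - 1) + 1 := by omega
      have hxi : x i = δ ^ (d i - 1) * δ := by
        show δ ^ (d i) = δ ^ (d i - 1) * δ
        rw [← pow_succ, ← hdi1]
      have hdj1 : d j ≤ d i - 1 := by omega
      have hxj : δ ^ (d i - 1) ≤ x j :=
        calc δ ^ (d i - 1) ≤ δ ^ (d j) := pow_le_pow_of_le_one hδ0.le hδ1 hdj1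
          _ = x j := rfl
      have hkey : (α * Δ + 1) * x i ≤ (1 - α) * x j := by
        calc (α * Δ + 1) * x i = ((α * Δ + 1) * δ) * δ ^ (d i - 1) := by rw [hxi]; ring
          _ = (1 - α) * δ ^ (d i - 1) := by rw [hδmul]
          _ ≤ (1 - α) * x j := mul_le_mul_of_nonneg_left hxj h1α.le
      have hsle : s * x i ≤ (α * Δ + 1) * x i := by
        apply mul_le_mul_of_nonneg_right _ (hx0 i).le
        rw [hsdef, htdef]; linarith
      have hdeg0 : (0:ℝ) ≤ α * (outdeg G i : ℝ) * x i := by positivity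
      have h2 : (1 - α) * x j ≤ (1 - α) * ∑ j' ∈ Finset.univ.filter (fun j' => G i j'), x j' :=
        mul_le_mul_of_nonneg_left hsum h1α.le
      linarith
  -- monotonicity and iteration
  have hmono : ∀ v w : Fin n → ℝ, (∀ j, v j ≤ w j) → ∀ i, (M *ᵥ v) i ≤ (M *ᵥ w) i := by
    intro v w hvw i
    simp only [Matrix.mulVec, dotProduct]
    exact Finset.sum_le_sum fun j _ => mul_le_mul_of_nonneg_left (hvw j) (hMentry i j)
  have hiter : ∀ k : ℕ, ∀ i, s ^ k * x i ≤ ((M ^ k) *ᵥ x) i := by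
    intro k
    induction k with
    | zero => intro i; simp [Matrix.one_mulVec]
    | succ k ih =>
      intro i
      have h1 : (M ^ (k + 1)) *ᵥ x = M *ᵥ ((M ^ k) *ᵥ x) := by
        rw [Matrix.mulVec_mulVec, ← pow_succ']
      have h2 : (M *ᵥ (fun j => s ^ k * x j)) i ≤ (M *ᵥ ((M ^ k) *ᵥ x)) i :=
        hmono _ _ ih i
      have h3 : (M *ᵥ (fun j => s ^ k * x j)) i = s ^ k * (M *ᵥ x) i := by
        have : (fun j => s ^ k * x j) = (s ^ k) • x := by ext j; simp
        rw [this, Matrix.mulVec_smul]; simp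
      have h4 : s * x i ≤ (M *ᵥ x) i := hbase i
      have h5 : s ^ k * (s * x i) ≤ s ^ k * (M *ᵥ x) i :=
        mul_le_mul_of_nonneg_left h4 (by positivity)
      calc s ^ (k + 1) * x i = s ^ k * (s * x i) := by ring
        _ ≤ s ^ k * (M *ᵥ x) i := h5
        _ = (M *ᵥ (fun j => s ^ k * x j)) i := h3.symm
        _ ≤ (M *ᵥ ((M ^ k) *ᵥ x)) i := h2
        _ = ((M ^ (k + 1)) *ᵥ x) i := by rw [h1]
  -- norm lower bound
  have hnormlb : ∀ k : ℕ, s ^ k * x u ≤ ‖M ^ k‖ * ‖x‖ := by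
    intro k
    calc s ^ k * x u ≤ ((M ^ k) *ᵥ x) u := hiter k u
      _ ≤ ‖((M ^ k) *ᵥ x) u‖ := le_abs_self _
      _ ≤ ‖(M ^ k) *ᵥ x‖ := norm_le_pi_norm _ u
      _ ≤ ‖M ^ k‖ * ‖x‖ := Matrix.linfty_opNorm_mulVec _ _
  -- complexification
  set Mc : Matrix (Fin n) (Fin n) ℂ := M.map Complex.ofReal with hMcdef
  have hMck : ∀ k : ℕ, Mc ^ k = (M ^ k).map Complex.ofReal := by
    intro k
    have h1 : Mc = (Complex.ofRealHom.mapMatrix : Matrix (Fin n) (Fin n) ℝ →+* _) M := rfl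
    have h2 : (M ^ k).map Complex.ofReal
        = (Complex.ofRealHom.mapMatrix : Matrix (Fin n) (Fin n) ℝ →+* _) (M ^ k) := rfl
    rw [h1, h2, map_pow]
  have hnormc : ∀ k : ℕ, ‖Mc ^ k‖ = ‖M ^ k‖ := by
    intro k; rw [hMck k]; exact linfty_norm_map_ofReal _
  -- main claim: a root of large modulus exists
  have hroots : ∃ μ : ℂ, ((Aalpha α G).map Complex.ofReal).charpoly.IsRoot μ
      ∧ t < ‖μ‖ := by
    by_contra hall
    push_neg at hall
    have hsr : spectralRadius ℂ Mc ≤ ENNReal.ofReal t := by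
      rw [spectralRadius]
      refine iSup₂_le fun μ hμ => ?_
      rw [← enorm_eq_nnnorm, ← ofReal_norm]
      refine ENNReal.ofReal_le_ofReal ?_
      exact hall μ (isRoot_charpoly_of_mem_spectrum hμ)
    obtain ⟨s', hs'def⟩ : ∃ v : ℝ, v = t + ε / 2 := ⟨_, rfl⟩
    have hs'0 : 0 < s' := by rw [hs'def]; positivity
    have hs's : s' < s := by rw [hs'def, hsdef]; linarith
    have hlt : spectralRadius ℂ Mc < ENNReal.ofReal s' :=
      lt_of_le_of_lt hsr (by rw [ENNReal.ofReal_lt_ofReal_iff hs'0]; linarith)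
    have hg := spectrum.pow_norm_pow_one_div_tendsto_nhds_spectralRadius Mc
    have hev1 : ∀ᶠ k : ℕ in Filter.atTop,
        ENNReal.ofReal (‖Mc ^ k‖ ^ (1/(k:ℝ))) < ENNReal.ofReal s' :=
      hg.eventually_lt_const hlt
    have hss' : 1 < s / s' := by rw [lt_div_iff₀ hs'0]; linarith
    have hev2 : ∀ᶠ k : ℕ in Filter.atTop, ‖x‖ / x u < (s / s') ^ k :=
      (tendsto_pow_atTop_atTop_of_one_lt hss').eventually_gt_atTop _
    obtain ⟨k, hk1, hk2, hk3⟩ :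
        ∃ k : ℕ, 1 ≤ k ∧ ENNReal.ofReal (‖Mc ^ k‖ ^ (1/(k:ℝ))) < ENNReal.ofReal s'
          ∧ ‖x‖ / x u < (s / s') ^ k := by
      obtain ⟨k, h1, h2, h3⟩ :=
        ((Filter.eventually_ge_atTop 1).and (hev1.and hev2)).exists
      exact ⟨k, h1, h2, h3⟩
    have hb : ‖Mc ^ k‖ ^ (1/(k:ℝ)) < s' := by
      rwa [ENNReal.ofReal_lt_ofReal_iff hs'0] at hk2
    have hMk : ‖Mc ^ k‖ < s' ^ k := by
      have ha : (0:ℝ) ≤ ‖Mc ^ k‖ := norm_nonneg _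
      have h2 : (‖Mc ^ k‖ ^ (1/(k:ℝ))) ^ k < s' ^ k :=
        pow_lt_pow_left₀ hb (Real.rpow_nonneg ha _) (by omega)
      calc ‖Mc ^ k‖ = (‖Mc ^ k‖ ^ (1/(k:ℝ))) ^ k := by
            rw [← Real.rpow_natCast (‖Mc ^ k‖ ^ (1/(k:ℝ))) k, ← Real.rpow_mul ha]
            rw [one_div_mul_cancel (by positivity : (k:ℝ) ≠ 0)]
            exact (Real.rpow_one _).symm
        _ < s' ^ k := h2
    -- contradiction
    have hxu0 : 0 < x u := hx0 u
    have hxnorm : x u ≤ ‖x‖ := (le_abs_self _).trans (norm_le_pi_norm x u)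
    have hlow : s ^ k * x u ≤ ‖Mc ^ k‖ * ‖x‖ := by rw [hnormc]; exact hnormlb k
    have hup : ‖Mc ^ k‖ * ‖x‖ < s' ^ k * ‖x‖ :=
      mul_lt_mul_of_pos_right hMk (lt_of_lt_of_le hxu0 hxnorm)
    have hfin : s ^ k * x u < s' ^ k * ‖x‖ := lt_of_le_of_lt hlow hup
    have : (s / s') ^ k < ‖x‖ / x u := by
      rw [div_pow, div_lt_div_iff₀ (by positivity) hxu0]
      calc s ^ k * x u < s' ^ k * ‖x‖ := hfin
        _ = ‖x‖ * s' ^ k := by ring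
    linarith
  -- conclude
  obtain ⟨μ, hμroot, hμ⟩ := hroots
  have hne0 : ((Aalpha α G).map Complex.ofReal).charpoly ≠ 0 :=
    (Matrix.charpoly_monic _).ne_zero
  have hfin : {r : ℝ | ∃ μ : ℂ, ((Aalpha α G).map Complex.ofReal).charpoly.IsRoot μ
      ∧ r = ‖μ‖}.Finite := by
    have h1 : {μ : ℂ | ((Aalpha α G).map Complex.ofReal).charpoly.IsRoot μ}.Finite :=
      Polynomial.finite_setOf_isRoot hne0
    have h2 : {r : ℝ | ∃ μ : ℂ, ((Aalpha α G).map Complex.ofReal).charpoly.IsRoot μ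
        ∧ r = ‖μ‖}
        = (fun μ : ℂ => ‖μ‖) '' {μ : ℂ | ((Aalpha α G).map Complex.ofReal).charpoly.IsRoot μ} := by
      ext r
      simp only [Set.mem_setOf_eq, Set.mem_image]
      constructor
      · rintro ⟨μ, h, rfl⟩; exact ⟨μ, h, rfl⟩
      · rintro ⟨μ, h, rfl⟩; exact ⟨μ, h, rfl⟩
    rw [h2]
    exact h1.image _
  have hmem : ‖μ‖ ∈ {r : ℝ | ∃ μ : ℂ,
      ((Aalpha α G).map Complex.ofReal).charpoly.IsRoot μ ∧ r = ‖μ‖} :=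
    ⟨μ, hμroot, rfl⟩
  have hle : ‖μ‖ ≤ lamAlpha α G := by
    rw [lamAlpha, specRad]
    exact le_csSup hfin.bddAbove hmem
  exact lt_of_lt_of_le hμ hle
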